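/- Canonical compaction commutes with evaluation: if M, s ⇓_{(ρT|ρ), F} v, s' in the intermediate semantics, then M, s ⇓_{(ρT|ρ), F*} v, s' in the optimised semantics, where F* is the canonical compact environment of F obtained by removing, from each captured closure environment, the bindings of the closure's own parameters (recursively). -/

import Mathlib

namespace CPC

abbrev Loc := Nat
abbrev Var := String

inductive Val : Type
  | unit | tt | ff
  | nat (n : Nat)
deriving DecidableEq

inductive Tm : Type
  | val (v : Val)
  | var (x : Var)
  | assign (x : Var) (t : Tm)
  | ite (c t e : Tm)
  | seq (a b : Tm)
  | letrec (f : Var) (ps : List Var) (body rest : Tm)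
  | call (f : Var) (args : List Tm)

abbrev Env := Var → Option Loc
abbrev Store := Loc → Option Val

def emptyEnv : Env := fun _ => none
def emptyStore : Store := fun _ => none

/-- Modification (extension) of a partial function. -/
def updFn {α β : Type} [DecidableEq α] (f : α → Option β) (x : α) (y : β) :
    α → Option β :=
  fun t => if t = x then some y else f t

/-- Concatenation of environments: leftmost binding wins. -/
def envCat (ρ₁ ρ₂ : Env) : Env := fun x => (ρ₁ x).orElse (fun _ => ρ₂ x)

def single (x : Var) (l : Loc) : Env := updFn emptyEnv x l

def envIm (ρ : Env) : Set Loc := {l | ∃ x, ρ x = some l}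
def envDom (ρ : Env) : Set Var := {x | ρ x ≠ none}
def storeDom (s : Store) : Set Loc := {l | s l ≠ none}

open Classical in
/-- Cleaning of a store with respect to an environment. -/
noncomputable def clean (ρ : Env) (s : Store) : Store :=
  fun l => if l ∈ envIm ρ then none else s l

open Classical in
/-- Restriction of a store to a set of locations. -/
noncomputable def resStore (s : Store) (D : Set Loc) : Store :=
  fun l => if l ∈ D then s l else none

/-- Store extension: `t` agrees with `s` on `dom s`. -/
def StoreLe (s t : Store) : Prop := ∀ l ∈ storeDom s, t l = s l

/-- Environment binding a list of variables to a list of locations. -/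
def envOf (xs : List Var) (ls : List Loc) : Env := fun y => (xs.zip ls).lookup y

/-- Store updated with a list of locations bound to a list of values. -/
def updStore (s : Store) (ls : List Loc) (vs : List Val) : Store :=
  fun l => ((ls.zip vs).lookup l).orElse (fun _ => s l)

/-- Closures: parameters, body, captured variable environment,
    captured function environment. -/
inductive Clos : Type
  | mk (ps : List Var) (body : Tm) (ρ : Env) (F : List (Var × Clos))

abbrev FEnv := List (Var × Clos)

def lookupF (F : FEnv) (f : Var) : Option Clos := F.lookup f

/-- `LocIn l F`: the location `l` appears in `F`
    (in some environment captured, recursively, in a closure of `F`). -/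
inductive LocIn : Loc → FEnv → Prop
  | env {l : Loc} {F : FEnv} {f ps body ρ F'} :
      (f, Clos.mk ps body ρ F') ∈ F → l ∈ envIm ρ → LocIn l F
  | deep {l : Loc} {F : FEnv} {f ps body ρ F'} :
      (f, Clos.mk ps body ρ F') ∈ F → LocIn l F' → LocIn l F

/-! ### Naive big-step reduction rules (with derivation height) -/

mutual
inductive EvalN : Nat → Env → FEnv → Tm → Store → Val → Store → Prop
  | val {ρ : Env} {F : FEnv} {v s} : EvalN 1 ρ F (.val v) s v s
  | var {ρ : Env} {F : FEnv} {x l s w} :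
      ρ x = some l → s l = some w → EvalN 1 ρ F (.var x) s w s
  | assign {n} {ρ : Env} {F : FEnv} {a s v s' x l} :
      EvalN n ρ F a s v s' → ρ x = some l → l ∈ storeDom s' →
      EvalN (n+1) ρ F (.assign x a) s .unit (updFn s' l v)
  | seq {n m} {ρ : Env} {F : FEnv} {a b s v s' v' s''} :
      EvalN n ρ F a s v s' → EvalN m ρ F b s' v' s'' →
      EvalN (n+m+1) ρ F (.seq a b) s v' s''
  | ifT {n m} {ρ : Env} {F : FEnv} {c b e s s' v s''} :
      EvalN n ρ F c s .tt s' → EvalN m ρ F b s' v s'' →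
      EvalN (n+m+1) ρ F (.ite c b e) s v s''
  | ifF {n m} {ρ : Env} {F : FEnv} {c b e s s' v s''} :
      EvalN n ρ F c s .ff s' → EvalN m ρ F e s' v s'' →
      EvalN (n+m+1) ρ F (.ite c b e) s v s''
  | letrec {n} {ρ : Env} {F : FEnv} {f ps a b s v s'} :
      EvalN n ρ ((f, Clos.mk ps a ρ F) :: F) b s v s' →
      EvalN (n+1) ρ F (.letrec f ps a b) s v s'
  | call {n m} {ρ : Env} {F : FEnv} {f args s₁ vs s₂ xs b} {ρ' : Env} {F' : FEnv}
      {ls : List Loc} {v s'} :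
      lookupF F f = some (Clos.mk xs b ρ' F') →
      EvalNArgs n ρ F args s₁ vs s₂ →
      ls.length = xs.length → vs.length = xs.length → ls.Nodup →
      (∀ l ∈ ls, l ∉ storeDom s₂ ∧ ¬ LocIn l ((f, Clos.mk xs b ρ' F') :: F')) →
      EvalN m (envCat (envOf xs ls) ρ') ((f, Clos.mk xs b ρ' F') :: F')
        b (updStore s₂ ls vs) v s' →
      EvalN (n+m+1) ρ F (.call f args) s₁ v s'

inductive EvalNArgs : Nat → Env → FEnv → List Tm → Store → List Val → Store → Prop
  | nil {ρ : Env} {F : FEnv} {s} : EvalNArgs 0 ρ F [] s [] s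
  | cons {n m} {ρ : Env} {F : FEnv} {a as s v s' vs s''} :
      EvalN n ρ F a s v s' → EvalNArgs m ρ F as s' vs s'' →
      EvalNArgs (n+m) ρ F (a :: as) s (v :: vs) s''
end

/-! ### Intermediate big-step reduction rules (split environments,
      minimal stores, non-compact closures) -/

mutual
inductive EvalI : Nat → Env → Env → FEnv → Tm → Store → Val → Store → Prop
  | val {ρT ρ : Env} {F : FEnv} {v s} :
      EvalI 1 ρT ρ F (.val v) s v (clean ρT s)
  | var {ρT ρ : Env} {F : FEnv} {x l s w} :
      envCat ρT ρ x = some l → s l = some w →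
      EvalI 1 ρT ρ F (.var x) s w (clean ρT s)
  | assign {n} {ρT ρ : Env} {F : FEnv} {a s v s' x l} :
      EvalI n emptyEnv (envCat ρT ρ) F a s v s' →
      envCat ρT ρ x = some l → l ∈ storeDom s' →
      EvalI (n+1) ρT ρ F (.assign x a) s .unit (clean ρT (updFn s' l v))
  | seq {n m} {ρT ρ : Env} {F : FEnv} {a b s v s' v' s''} :
      EvalI n emptyEnv (envCat ρT ρ) F a s v s' → EvalI m ρT ρ F b s' v' s'' →
      EvalI (n+m+1) ρT ρ F (.seq a b) s v' s''
  | ifT {n m} {ρT ρ : Env} {F : FEnv} {c b e s s' v s''} :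
      EvalI n emptyEnv (envCat ρT ρ) F c s .tt s' → EvalI m ρT ρ F b s' v s'' →
      EvalI (n+m+1) ρT ρ F (.ite c b e) s v s''
  | ifF {n m} {ρT ρ : Env} {F : FEnv} {c b e s s' v s''} :
      EvalI n emptyEnv (envCat ρT ρ) F c s .ff s' → EvalI m ρT ρ F e s' v s'' →
      EvalI (n+m+1) ρT ρ F (.ite c b e) s v s''
  | letrec {n} {ρT ρ : Env} {F : FEnv} {f ps a b s v s'} :
      EvalI n ρT ρ ((f, Clos.mk ps a (envCat ρT ρ) F) :: F) b s v s' →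
      EvalI (n+1) ρT ρ F (.letrec f ps a b) s v s'
  | call {n m} {ρT ρ : Env} {F : FEnv} {f args s₁ vs s₂ xs b} {ρ' : Env} {F' : FEnv}
      {ls : List Loc} {v s'} :
      lookupF F f = some (Clos.mk xs b ρ' F') →
      EvalIArgs n (envCat ρT ρ) F args s₁ vs s₂ →
      ls.length = xs.length → vs.length = xs.length → ls.Nodup →
      (∀ l ∈ ls, l ∉ storeDom s₂ ∧ ¬ LocIn l ((f, Clos.mk xs b ρ' F') :: F')) →
      EvalI m (envOf xs ls) ρ' ((f, Clos.mk xs b ρ' F') :: F')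
        b (updStore s₂ ls vs) v s' →
      EvalI (n+m+1) ρT ρ F (.call f args) s₁ v (clean ρT s')

inductive EvalIArgs : Nat → Env → FEnv → List Tm → Store → List Val → Store → Prop
  | nil {ρ : Env} {F : FEnv} {s} : EvalIArgs 0 ρ F [] s [] s
  | cons {n m} {ρ : Env} {F : FEnv} {a as s v s' vs s''} :
      EvalI n emptyEnv ρ F a s v s' → EvalIArgs m ρ F as s' vs s'' →
      EvalIArgs (n+m) ρ F (a :: as) s (v :: vs) s''
end

/-- Restriction of an environment outside a list of variables. -/
def restrictEnv (ρ : Env) (ps : List Var) : Env :=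
  fun x => if x ∈ ps then none else ρ x

/-! ### Optimised big-step reduction rules (minimal stores and compact
      closures): identical to the intermediate rules except that the
      (letrec) rule builds compact closures -/

mutual
inductive EvalO : Nat → Env → Env → FEnv → Tm → Store → Val → Store → Prop
  | val {ρT ρ : Env} {F : FEnv} {v s} :
      EvalO 1 ρT ρ F (.val v) s v (clean ρT s)
  | var {ρT ρ : Env} {F : FEnv} {x l s w} :
      envCat ρT ρ x = some l → s l = some w →
      EvalO 1 ρT ρ F (.var x) s w (clean ρT s)
  | assign {n} {ρT ρ : Env} {F : FEnv} {a s v s' x l} :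
      EvalO n emptyEnv (envCat ρT ρ) F a s v s' →
      envCat ρT ρ x = some l → l ∈ storeDom s' →
      EvalO (n+1) ρT ρ F (.assign x a) s .unit (clean ρT (updFn s' l v))
  | seq {n m} {ρT ρ : Env} {F : FEnv} {a b s v s' v' s''} :
      EvalO n emptyEnv (envCat ρT ρ) F a s v s' → EvalO m ρT ρ F b s' v' s'' →
      EvalO (n+m+1) ρT ρ F (.seq a b) s v' s''
  | ifT {n m} {ρT ρ : Env} {F : FEnv} {c b e s s' v s''} :
      EvalO n emptyEnv (envCat ρT ρ) F c s .tt s' → EvalO m ρT ρ F b s' v s'' →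
      EvalO (n+m+1) ρT ρ F (.ite c b e) s v s''
  | ifF {n m} {ρT ρ : Env} {F : FEnv} {c b e s s' v s''} :
      EvalO n emptyEnv (envCat ρT ρ) F c s .ff s' → EvalO m ρT ρ F e s' v s'' →
      EvalO (n+m+1) ρT ρ F (.ite c b e) s v s''
  | letrec {n} {ρT ρ : Env} {F : FEnv} {f ps a b s v s'} :
      EvalO n ρT ρ ((f, Clos.mk ps a (restrictEnv (envCat ρT ρ) ps) F) :: F) b s v s' →
      EvalO (n+1) ρT ρ F (.letrec f ps a b) s v s'
  | call {n m} {ρT ρ : Env} {F : FEnv} {f args s₁ vs s₂ xs b} {ρ' : Env} {F' : FEnv}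
      {ls : List Loc} {v s'} :
      lookupF F f = some (Clos.mk xs b ρ' F') →
      EvalOArgs n (envCat ρT ρ) F args s₁ vs s₂ →
      ls.length = xs.length → vs.length = xs.length → ls.Nodup →
      (∀ l ∈ ls, l ∉ storeDom s₂ ∧ ¬ LocIn l ((f, Clos.mk xs b ρ' F') :: F')) →
      EvalO m (envOf xs ls) ρ' ((f, Clos.mk xs b ρ' F') :: F')
        b (updStore s₂ ls vs) v s' →
      EvalO (n+m+1) ρT ρ F (.call f args) s₁ v (clean ρT s')

inductive EvalOArgs : Nat → Env → FEnv → List Tm → Store → List Val → Store → Prop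
  | nil {ρ : Env} {F : FEnv} {s} : EvalOArgs 0 ρ F [] s [] s
  | cons {n m} {ρ : Env} {F : FEnv} {a as s v s' vs s''} :
      EvalO n emptyEnv ρ F a s v s' → EvalOArgs m ρ F as s' vs s'' →
      EvalOArgs (n+m) ρ F (a :: as) s (v :: vs) s''
end


mutual
/-- Canonical compaction of a closure: the bindings of the closure's own
parameters are removed from the captured environment, recursively. -/
inductive ClosCompacts : Clos → Clos → Prop
  | mk {ps b ρ F F'} : FEnvCompacts F F' →
      ClosCompacts (.mk ps b ρ F) (.mk ps b (restrictEnv ρ ps) F')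

/-- Canonical compaction of a function environment. -/
inductive FEnvCompacts : FEnv → FEnv → Prop
  | nil : FEnvCompacts [] []
  | cons {f c c' F F'} : ClosCompacts c c' → FEnvCompacts F F' →
      FEnvCompacts ((f, c) :: F) ((f, c') :: F')
end

/-! ### Auxiliary lemmas -/

lemma lookup_compacts : ∀ {F Fc : FEnv}, FEnvCompacts F Fc → ∀ {f : Var} {c : Clos},
    lookupF F f = some c →
    ∃ c', lookupF Fc f = some c' ∧ ClosCompacts c c' := by
  intro F
  induction F with
  | nil => intro Fc hc f c h; simp [lookupF] at h
  | cons p F₀ ih =>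
    intro Fc hc f c h
    cases hc with
    | cons hcc hF =>
      rename_i g c₀ c₀' F₀'
      by_cases hfg : f = g
      · subst hfg
        simp only [lookupF, List.lookup, beq_self_eq_true] at h ⊢
        obtain rfl : c₀ = c := by injection h
        exact ⟨c₀', rfl, hcc⟩
      · have hbe : (f == g) = false := beq_false_of_ne hfg
        simp only [lookupF, List.lookup, hbe] at h ⊢
        exact ih hF h

lemma mem_compacts : ∀ {F Fc : FEnv}, FEnvCompacts F Fc → ∀ {g : Var} {c' : Clos},
    (g, c') ∈ Fc → ∃ c, (g, c) ∈ F ∧ ClosCompacts c c' := by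
  intro F
  induction F with
  | nil => intro Fc hc g c' h; cases hc; simp at h
  | cons p F₀ ih =>
    intro Fc hc g c' h
    cases hc with
    | cons hcc hF =>
      rcases List.mem_cons.1 h with h | h
      · cases h
        exact ⟨_, List.mem_cons_self, hcc⟩
      · obtain ⟨c, hmem, hcc'⟩ := ih hF h
        exact ⟨c, List.mem_cons_of_mem _ hmem, hcc'⟩

lemma envIm_restrict {ρ : Env} {ps : List Var} {l : Loc}
    (h : l ∈ envIm (restrictEnv ρ ps)) : l ∈ envIm ρ := by
  obtain ⟨x, hx⟩ := h
  unfold restrictEnv at hx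
  split at hx
  · simp at hx
  · exact ⟨x, hx⟩

lemma locIn_compacts {l : Loc} {Fc : FEnv} (hL : LocIn l Fc) :
    ∀ {F : FEnv}, FEnvCompacts F Fc → LocIn l F := by
  induction hL with
  | env hmem him =>
    intro F hc
    obtain ⟨c, hmemF, hcc⟩ := mem_compacts hc hmem
    cases hcc with
    | mk hF' => exact LocIn.env hmemF (envIm_restrict him)
  | deep hmem _ ih =>
    intro F hc
    obtain ⟨c, hmemF, hcc⟩ := mem_compacts hc hmem
    cases hcc with
    | mk hF' => exact LocIn.deep hmemF (ih hF')

lemma envCat_emptyEnv (ρ : Env) : envCat emptyEnv ρ = ρ := by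
  funext x; rfl

lemma envOf_isSome {xs : List Var} {ls : List Loc} {x : Var}
    (hx : x ∈ xs) (hlen : ls.length = xs.length) :
    ∃ l, envOf xs ls x = some l := by
  induction xs generalizing ls with
  | nil => simp at hx
  | cons a as ih =>
    cases ls with
    | nil => simp at hlen
    | cons l ls' =>
      by_cases hxa : x = a
      · subst hxa
        exact ⟨l, by simp [envOf, List.lookup]⟩
      · rcases List.mem_cons.1 hx with h | h
        · exact absurd h hxa
        · obtain ⟨l', hl'⟩ := ih h (by simpa using hlen)
          refine ⟨l', ?_⟩
          have hbe : (x == a) = false := beq_false_of_ne hxa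
          simp only [envOf, List.zip_cons_cons, List.lookup, hbe]
          exact hl'

lemma envCat_restrict {xs : List Var} {ls : List Loc}
    (hlen : ls.length = xs.length) (ρ : Env) :
    envCat (envOf xs ls) ρ = envCat (envOf xs ls) (restrictEnv ρ xs) := by
  funext x
  by_cases hx : x ∈ xs
  · obtain ⟨l, hl⟩ := envOf_isSome hx hlen
    simp [envCat, hl]
  · simp [envCat, restrictEnv, hx]

lemma evalI_pos {n : Nat} {ρT ρ : Env} {F : FEnv} {M : Tm} {s s' : Store} {v : Val}
    (h : EvalI n ρT ρ F M s v s') : 0 < n := by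
  cases h <;> omega

lemma main_lemma : ∀ n : Nat,
    (∀ (ρT ρ ρ₂ : Env) (F Fc : FEnv) (M : Tm) (s : Store) (v : Val) (s' : Store),
      EvalI n ρT ρ F M s v s' → FEnvCompacts F Fc →
      envCat ρT ρ = envCat ρT ρ₂ →
      ∃ m, EvalO m ρT ρ₂ Fc M s v s') ∧
    (∀ (ρ : Env) (F Fc : FEnv) (as : List Tm) (s : Store) (vs : List Val) (s' : Store),
      EvalIArgs n ρ F as s vs s' → FEnvCompacts F Fc →
      ∃ m, EvalOArgs m ρ Fc as s vs s') := by
  intro n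
  induction n using Nat.strong_induction_on with
  | _ n ih =>
    have hP : ∀ (ρT ρ ρ₂ : Env) (F Fc : FEnv) (M : Tm) (s : Store) (v : Val) (s' : Store),
        EvalI n ρT ρ F M s v s' → FEnvCompacts F Fc →
        envCat ρT ρ = envCat ρT ρ₂ →
        ∃ m, EvalO m ρT ρ₂ Fc M s v s' := by
      intro ρT ρ ρ₂ F Fc M s v s' h hc heq
      cases h with
      | val => exact ⟨1, EvalO.val⟩
      | var hx hs => exact ⟨1, EvalO.var (heq ▸ hx) hs⟩
      | @assign n₁ _ _ _ a _ v₁ s₁ x l ha hx hdom =>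
        obtain ⟨m₁, hO⟩ := (ih n₁ (by omega)).1 emptyEnv (envCat ρT ρ) (envCat ρT ρ₂)
          F Fc _ _ _ _ ha hc (by rw [envCat_emptyEnv, envCat_emptyEnv, heq])
        exact ⟨m₁ + 1, EvalO.assign hO (heq ▸ hx) hdom⟩
      | @seq n₁ m₁ _ _ _ a b _ v₁ s₁ _ _ ha hb =>
        obtain ⟨k₁, hO₁⟩ := (ih n₁ (by omega)).1 emptyEnv (envCat ρT ρ) (envCat ρT ρ₂)
          F Fc _ _ _ _ ha hc (by rw [envCat_emptyEnv, envCat_emptyEnv, heq])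
        obtain ⟨k₂, hO₂⟩ := (ih m₁ (by omega)).1 ρT ρ ρ₂ F Fc _ _ _ _ hb hc heq
        exact ⟨k₁ + k₂ + 1, EvalO.seq hO₁ hO₂⟩
      | @ifT n₁ m₁ _ _ _ c b e _ s₁ _ _ hcnd hb =>
        obtain ⟨k₁, hO₁⟩ := (ih n₁ (by omega)).1 emptyEnv (envCat ρT ρ) (envCat ρT ρ₂)
          F Fc _ _ _ _ hcnd hc (by rw [envCat_emptyEnv, envCat_emptyEnv, heq])
        obtain ⟨k₂, hO₂⟩ := (ih m₁ (by omega)).1 ρT ρ ρ₂ F Fc _ _ _ _ hb hc heq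
        exact ⟨k₁ + k₂ + 1, EvalO.ifT hO₁ hO₂⟩
      | @ifF n₁ m₁ _ _ _ c b e _ s₁ _ _ hcnd hb =>
        obtain ⟨k₁, hO₁⟩ := (ih n₁ (by omega)).1 emptyEnv (envCat ρT ρ) (envCat ρT ρ₂)
          F Fc _ _ _ _ hcnd hc (by rw [envCat_emptyEnv, envCat_emptyEnv, heq])
        obtain ⟨k₂, hO₂⟩ := (ih m₁ (by omega)).1 ρT ρ ρ₂ F Fc _ _ _ _ hb hc heq
        exact ⟨k₁ + k₂ + 1, EvalO.ifF hO₁ hO₂⟩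
      | @letrec n₁ _ _ _ f ps a b _ _ _ hb =>
        obtain ⟨k, hO⟩ := (ih n₁ (by omega)).1 ρT ρ ρ₂
          ((f, Clos.mk ps a (envCat ρT ρ) F) :: F)
          ((f, Clos.mk ps a (restrictEnv (envCat ρT ρ) ps) Fc) :: Fc)
          _ _ _ _ hb
          (FEnvCompacts.cons (ClosCompacts.mk hc) hc) heq
        rw [heq] at hO
        exact ⟨k + 1, EvalO.letrec hO⟩
      | @call n₁ m₁ _ _ _ f args _ vs s₂ xs b ρ' F' ls _ s₃ hlk hargs hlen hlen2 hnd hfresh hbody =>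
        obtain ⟨c', hlk', hcc⟩ := lookup_compacts hc hlk
        cases hcc with
        | mk hF'c =>
          rename_i F'c
          obtain ⟨k₁, hargsO⟩ := (ih n₁ (by omega)).2 (envCat ρT ρ) F Fc _ _ _ _ hargs hc
          rw [heq] at hargsO
          have hcomp : FEnvCompacts ((f, Clos.mk xs b ρ' F') :: F')
              ((f, Clos.mk xs b (restrictEnv ρ' xs) F'c) :: F'c) :=
            FEnvCompacts.cons (ClosCompacts.mk hF'c) hF'c
          obtain ⟨k₂, hbodyO⟩ := (ih m₁ (by omega)).1 (envOf xs ls) ρ'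
            (restrictEnv ρ' xs) _ _ _ _ _ _ hbody hcomp (envCat_restrict hlen ρ')
          refine ⟨k₁ + k₂ + 1, EvalO.call hlk' hargsO hlen hlen2 hnd ?_ hbodyO⟩
          intro l hl
          exact ⟨(hfresh l hl).1, fun hL => (hfresh l hl).2 (locIn_compacts hL hcomp)⟩
    refine ⟨hP, ?_⟩
    intro ρ F Fc as s vs s' h hc
    cases h with
    | nil => exact ⟨0, EvalOArgs.nil⟩
    | @cons n₁ m₁ _ _ a as' _ v₁ s₁ vs₁ _ ha has =>
      have hpos := evalI_pos ha
      have hP₁ : ∃ m, EvalO m emptyEnv ρ Fc a s v₁ s₁ := by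
        rcases Nat.lt_or_ge n₁ (n₁ + m₁) with hlt | hge
        · exact (ih n₁ hlt).1 emptyEnv ρ ρ F Fc _ _ _ _ ha hc rfl
        · have : m₁ = 0 := by omega
          subst this
          exact hP emptyEnv ρ ρ F Fc _ _ _ _ ha hc rfl
      obtain ⟨k₁, hO₁⟩ := hP₁
      obtain ⟨k₂, hO₂⟩ := (ih m₁ (by omega)).2 ρ F Fc _ _ _ _ has hc
      exact ⟨k₁ + k₂, EvalOArgs.cons hO₁ hO₂⟩

/-- canonical compaction commutes with evaluation
(intermediate implies optimised). -/
theorem intermediate_implies_optimised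
    {n : Nat} {ρT ρ : Env} {F : FEnv} {M : Tm} {s s' : Store} {v : Val}
    (h : EvalI n ρT ρ F M s v s')
    (Fc : FEnv) (hc : FEnvCompacts F Fc) :
    ∃ m, EvalO m ρT ρ Fc M s v s' :=
  (main_lemma n).1 ρT ρ ρ F Fc M s v s' h hc rfl

end CPC
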